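/- Let A be a 3×3 normal idempotent matrix with columns p = column 1, q = column 2, and w = (-a_{31}, -a_{32}, 0). Then w is a tropical linear combination of p and q: w ≡ max(p + (-a_{31})·(1,1,1), q + (-a_{32})·(1,1,1)) coordinatewise, modulo ℝ(1,1,1). -/
import Mathlib

/-- For a 3×3 normal idempotent matrix with columns `p, q`, the Cramer vertex
`w = (-a_{31},-a_{32},0)` is a tropical linear combination
`max(p + (-a_{31})·1, q + (-a_{32})·1)` modulo `ℝ(1,1,1)`. -/
theorem stmt16 (A : Matrix (Fin 3) (Fin 3) ℝ)
    (hdiag : ∀ i, A i i = 0) (hneg : ∀ i j, A i j ≤ 0)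
    (hsub : ∀ i j k, A i k + A k j ≤ A i j) :
    ∃ c : ℝ, ∀ i,
      (![-(A 2 0), -(A 2 1), 0] : Fin 3 → ℝ) i
        = max (A i 0 + (-(A 2 0))) (A i 1 + (-(A 2 1))) + c := by
  use 0
  intro i
  have h1 := hsub 2 1 0
  have h2 := hsub 2 0 1
  have d0 := hdiag 0
  have d1 := hdiag 1
  fin_cases i <;> simp <;>
    (first | rw [max_eq_left (by linarith)] | rw [max_eq_right (by linarith)]) <;> linarith
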